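/- Let x : Fin n → ℝ (n ≥ 1) be a score vector with set of maximizers M = {i : x_i = max_j x_j}, and let v : Fin n → ℝ^d be an arbitrary family of value vectors in Euclidean space ℝ^d. Then the attention output ∑_{i} softmax_β(x)_i • v_i converges, as β → ∞, to the average (1/|M|) ∑_{i ∈ M} v_i of the values at the maximizing positions. -/

import Mathlib

open Filter Real Finset

theorem attention_tendsto_average_over_argmax
    (n d : ℕ) (x : Fin (n + 1) → ℝ) (v : Fin (n + 1) → EuclideanSpace ℝ (Fin d)) :
    Filter.Tendsto
      (fun β : ℝ => ∑ i, (Real.exp (β * x i) / ∑ j, Real.exp (β * x j)) • v i)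
      Filter.atTop
      (nhds ((1 / ((Finset.univ.filter
          (fun k => x k = Finset.univ.sup' Finset.univ_nonempty x)).card : ℝ)) •
        ∑ i ∈ Finset.univ.filter
          (fun k => x k = Finset.univ.sup' Finset.univ_nonempty x), v i)) := by
  set m := Finset.univ.sup' Finset.univ_nonempty x with hm
  set M := Finset.univ.filter (fun k => x k = m) with hM
  -- M is nonempty
  have hMne : M.Nonempty := by
    obtain ⟨i, _, hi⟩ := Finset.exists_mem_eq_sup' (Finset.univ_nonempty) x
    exact ⟨i, by simp [hM, ← hi]; exact hm.symm⟩
  have hcard : (0 : ℝ) < (M.card : ℝ) := by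
    exact_mod_cast Finset.card_pos.mpr hMne
  -- rewrite coefficients
  have hrw : ∀ β : ℝ, ∀ i : Fin (n+1), Real.exp (β * x i) / ∑ j, Real.exp (β * x j)
      = Real.exp (β * (x i - m)) / ∑ j, Real.exp (β * (x j - m)) := by
    intro β i
    have hk : ∀ k : Fin (n+1), Real.exp (β * x k)
        = Real.exp (β * (x k - m)) * Real.exp (β * m) := by
      intro k; rw [← Real.exp_add]; ring_nf
    simp only [hk, ← Finset.sum_mul]
    rw [mul_div_mul_right _ _ (Real.exp_pos (β * m)).ne']
  -- numerator limits
  have hnum : ∀ i : Fin (n+1), Tendsto (fun β : ℝ => Real.exp (β * (x i - m)))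
      atTop (nhds (if x i = m then 1 else 0)) := by
    intro i
    by_cases h : x i = m
    · simp [h]
    · simp only [h, if_false]
      have hlt : x i - m < 0 :=
        sub_neg.mpr (lt_of_le_of_ne (Finset.le_sup' x (Finset.mem_univ i)) h)
      have h1 : Tendsto (fun β : ℝ => β * (x i - m)) atTop atBot :=
        Filter.Tendsto.atTop_mul_const_of_neg hlt tendsto_id
      exact Real.tendsto_exp_atBot.comp h1
  -- denominator limit
  have hden : Tendsto (fun β : ℝ => ∑ j, Real.exp (β * (x j - m))) atTop
      (nhds (M.card : ℝ)) := by
    have := tendsto_finset_sum Finset.univ (fun j _ => hnum j)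
    have hsum : ∑ j, (if x j = m then (1:ℝ) else 0) = (M.card : ℝ) := by
      rw [Finset.sum_boole]
    rwa [hsum] at this
  -- coefficient limit
  have hcoef : ∀ i : Fin (n+1), Tendsto
      (fun β : ℝ => Real.exp (β * x i) / ∑ j, Real.exp (β * x j)) atTop
      (nhds ((if x i = m then 1 else 0) / (M.card : ℝ))) := by
    intro i
    simp only [hrw]
    exact (hnum i).div hden hcard.ne'
  have hterm : ∀ i : Fin (n+1), Tendsto
      (fun β : ℝ => (Real.exp (β * x i) / ∑ j, Real.exp (β * x j)) • v i) atTop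
      (nhds (((if x i = m then 1 else 0) / (M.card : ℝ)) • v i)) :=
    fun i => (hcoef i).smul_const (v i)
  have htot := tendsto_finset_sum Finset.univ (fun i _ => hterm i)
  convert htot using 2
  rw [Finset.smul_sum]
  rw [← Finset.sum_filter_add_sum_filter_not Finset.univ (fun k => x k = m)
    (fun i => ((if x i = m then (1:ℝ) else 0) / (M.card : ℝ)) • v i)]
  rw [← hM]
  have h1 : ∑ i ∈ M, ((if x i = m then (1:ℝ) else 0) / (M.card : ℝ)) • v i
      = ∑ i ∈ M, (1 / (M.card : ℝ)) • v i := by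
    apply Finset.sum_congr rfl
    intro i hi
    rw [hM] at hi
    simp [Finset.mem_filter.mp hi |>.2]
  have h2 : ∑ i ∈ Finset.univ.filter (fun k => ¬ x k = m),
      ((if x i = m then (1:ℝ) else 0) / (M.card : ℝ)) • v i = 0 := by
    apply Finset.sum_eq_zero
    intro i hi
    simp [Finset.mem_filter.mp hi |>.2]
  rw [h1, h2, add_zero]
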